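/- Let (X,d) be a doubling metric space. Then there exists a constant c > 0, depending only on the doubling constant, such that for every r > 0 there exist an r-separated set of points {x_i} ⊂ X and radii r_i ∈ [r, 2r] with the following two properties: (1) the balls B(x_i, r_i) cover X, i.e. X ⊂ ⋃_i B(x_i, r_i); and (2) for all indices i, j, the quantity d(x_i, x_j) − r_i − r_j does not lie in the open interval (0, c·r). -/

import Mathlib

open Set Metric

/-- A metric space is doubling with constant `C` if every ball of radius `r > 0` can be
covered by at most `C` balls of radius `r / 2`. -/
def IsDoublingSpace (X : Type*) [MetricSpace X] (C : ℕ) : Prop :=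
  ∀ (x : X) (r : ℝ), 0 < r → ∃ s : Finset X, s.card ≤ C ∧
    ball x r ⊆ ⋃ y ∈ s, ball y (r / 2)

section Aux

variable {X : Type} [MetricSpace X] {C : ℕ}

lemma iter_doubling (hC : IsDoublingSpace X C) (k : ℕ) (x : X) (R : ℝ) (hR : 0 < R) :
    ∃ F : Finset X, F.card ≤ C ^ k ∧ ball x R ⊆ ⋃ y ∈ F, ball y (R / 2 ^ k) := by
  classical
  induction k with
  | zero => exact ⟨{x}, by simp, by simp⟩
  | succ k ih =>
    obtain ⟨F, hcard, hcov⟩ := ih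
    choose G hGcard hGcov using fun y : X => hC y (R / 2 ^ k) (by positivity)
    refine ⟨F.biUnion G, ?_, ?_⟩
    · calc (F.biUnion G).card ≤ ∑ y ∈ F, (G y).card := Finset.card_biUnion_le
        _ ≤ ∑ _y ∈ F, C := Finset.sum_le_sum fun y _ => hGcard y
        _ = F.card * C := by simp [Finset.sum_const, Nat.smul_one_eq_cast]
        _ ≤ C ^ k * C := Nat.mul_le_mul_right _ hcard
        _ = C ^ (k + 1) := (pow_succ C k).symm
    · intro z hz
      obtain ⟨_, ⟨y, rfl⟩, _, ⟨hyF, rfl⟩, hzy⟩ := hcov hz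
      obtain ⟨_, ⟨w, rfl⟩, _, ⟨hwG, rfl⟩, hzw⟩ := hGcov y hzy
      have : z ∈ ball w (R / 2 ^ (k + 1)) := by
        have : R / 2 ^ k / 2 = R / 2 ^ (k + 1) := by ring
        rwa [this] at hzw
      exact mem_biUnion (Finset.mem_biUnion.2 ⟨y, hyF, hwG⟩) this

/-- Any finite `r`-separated set within distance `6r` of `x` has at most `C^4` elements. -/
lemma card_sep_le (hC : IsDoublingSpace X C) {r : ℝ} (hr : 0 < r) (x : X)
    (t : Finset X) (ht : ∀ p ∈ t, dist x p ≤ 6 * r)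
    (hsep : ∀ p ∈ t, ∀ q ∈ t, p ≠ q → r ≤ dist p q) :
    t.card ≤ C ^ 4 := by
  classical
  obtain ⟨F, hFcard, hFcov⟩ := iter_doubling hC 4 x (8 * r) (by positivity)
  have hhalf : (8 * r) / 2 ^ 4 = r / 2 := by ring
  rw [hhalf] at hFcov
  have hmem : ∀ p ∈ t, ∃ y ∈ F, dist p y < r / 2 := by
    intro p hp
    have : p ∈ ball x (8 * r) := by
      rw [mem_ball, dist_comm]
      calc dist x p ≤ 6 * r := ht p hp
        _ < 8 * r := by linarith
    obtain ⟨_, ⟨y, rfl⟩, _, ⟨hyF, rfl⟩, hpy⟩ := hFcov this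
    exact ⟨y, hyF, mem_ball.1 hpy⟩
  set f : X → X := fun p => if h : ∃ y ∈ F, dist p y < r / 2 then h.choose else x with hf
  have hfF : ∀ p ∈ t, f p ∈ F ∧ dist p (f p) < r / 2 := by
    intro p hp
    have h := hmem p hp
    simp only [hf, dif_pos h]
    exact ⟨h.choose_spec.1, h.choose_spec.2⟩
  calc t.card ≤ F.card := by
        apply Finset.card_le_card_of_injOn f (fun p hp => (hfF p hp).1)
        intro p hp q hq hpq
        by_contra hne
        have h1 := (hfF p hp).2
        have h2 := (hfF q hq).2
        rw [hpq] at h1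
        have : dist p q < r := by
          calc dist p q ≤ dist p (f q) + dist q (f q) := dist_triangle_right _ _ _
            _ < r / 2 + r / 2 := by linarith
            _ = r := by ring
        exact absurd (hsep p hp q hq hne) (not_le.2 this)
    _ ≤ C ^ 4 := hFcard

open Classical in
/-- The greedy assignment of radii, by transfinite recursion along a well-order. -/
noncomputable def greedyRho (s : Set X) (r c : ℝ) (n : ℕ) : X → ℝ :=
  WellFounded.fix (IsWellFounded.wf (r := @WellOrderingRel X))
    (fun x ρ' =>
      if h : ∃ j : ℕ, j ≤ n ∧ ∀ y, ∀ hy : WellOrderingRel y x, y ∈ s → dist x y ≤ 5 * r →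
          dist x y - (r + (j : ℝ) * (c * r)) - ρ' y hy ∉ Ioo 0 (c * r)
      then r + (h.choose : ℝ) * (c * r) else r)

open Classical in
lemma greedyRho_eq (s : Set X) (r c : ℝ) (n : ℕ) (x : X) :
    greedyRho s r c n x =
      if h : ∃ j : ℕ, j ≤ n ∧ ∀ y, ∀ _hy : WellOrderingRel y x, y ∈ s → dist x y ≤ 5 * r →
          dist x y - (r + (j : ℝ) * (c * r)) - greedyRho s r c n y ∉ Ioo 0 (c * r)
      then r + (h.choose : ℝ) * (c * r) else r := by
  rw [greedyRho, WellFounded.fix_eq]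

end Aux

/-- **Lemma 2.1.** In a doubling metric space there is a constant `c > 0`, depending only on
the doubling constant, such that for every `r > 0` there are `r`-separated points `{xᵢ}` and
radii `rᵢ ∈ [r, 2r]` such that the balls `B(xᵢ, rᵢ)` cover `X` and for all `i, j` the quantity
`d(xᵢ, xⱼ) - rᵢ - rⱼ` does not lie in the open interval `(0, c * r)`. -/
theorem separated_ball_covering (C : ℕ) :
    ∃ c : ℝ, 0 < c ∧
      ∀ (X : Type) [MetricSpace X], IsDoublingSpace X C →
        ∀ r : ℝ, 0 < r → ∃ (s : Set X) (ρ : X → ℝ),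
          (∀ x ∈ s, ∀ y ∈ s, x ≠ y → r ≤ dist x y) ∧
          (∀ x ∈ s, ρ x ∈ Icc r (2 * r)) ∧
          (∀ z : X, ∃ x ∈ s, z ∈ ball x (ρ x)) ∧
          (∀ x ∈ s, ∀ y ∈ s, dist x y - ρ x - ρ y ∉ Ioo 0 (c * r)) := by
  classical
  set n : ℕ := C ^ 4 with hn
  set c : ℝ := 1 / (n + 1) with hc
  have hc0 : 0 < c := by positivity
  have hc1 : c ≤ 1 := by
    rw [hc, div_le_one (by positivity)]
    have : (0 : ℝ) ≤ (n : ℝ) := Nat.cast_nonneg n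
    linarith
  refine ⟨c, hc0, ?_⟩
  intro X _ hC r hr
  have hcr : 0 < c * r := by positivity
  -- maximal r-separated set via Zorn
  obtain ⟨s, hs⟩ := zorn_subset {t : Set X | ∀ x ∈ t, ∀ y ∈ t, x ≠ y → r ≤ dist x y} (by
    intro ch hch hchain
    refine ⟨⋃₀ ch, ?_, fun t ht => subset_sUnion_of_mem ht⟩
    intro x hx y hy hxy
    obtain ⟨t1, ht1, hxt1⟩ := hx
    obtain ⟨t2, ht2, hyt2⟩ := hy
    rcases hchain.total ht1 ht2 with h | h
    · exact hch ht2 x (h hxt1) y hyt2 hxy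
    · exact hch ht1 x hxt1 y (h hyt2) hxy)
  have hssep : ∀ x ∈ s, ∀ y ∈ s, x ≠ y → r ≤ dist x y := hs.prop
  -- coverage from maximality
  have hcover : ∀ z : X, ∃ x ∈ s, dist z x < r := by
    intro z
    by_contra hcon
    push_neg at hcon
    have hzs : z ∉ s := fun hz => absurd (dist_self z ▸ hcon z hz) (by simpa using hr)
    have : insert z s ∈ {t : Set X | ∀ x ∈ t, ∀ y ∈ t, x ≠ y → r ≤ dist x y} := by
      intro x hx y hy hxy
      rcases hx with rfl | hx
      · rcases hy with rfl | hy
        · exact absurd rfl hxy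
        · exact hcon y hy
      · rcases hy with rfl | hy
        · rw [dist_comm]; exact hcon x hx
        · exact hssep x hx y hy hxy
    have := hs.eq_of_subset this (subset_insert z s)
    exact hzs (this ▸ mem_insert z s)
  -- finiteness of neighbor sets
  have hfin : ∀ x : X, (s ∩ closedBall x (6 * r)).Finite := by
    intro x
    by_contra hinf
    have hinf' : (s ∩ closedBall x (6 * r)).Infinite := hinf
    obtain ⟨t, hts, htcard⟩ := hinf'.exists_subset_card_eq (C ^ 4 + 1)
    have : t.card ≤ C ^ 4 := by
      apply card_sep_le hC hr x t
      · intro p hp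
        exact mem_closedBall'.1 (hts hp).2
      · intro p hp q hq hpq
        exact hssep p (hts hp).1 q (hts hq).1 hpq
    omega
  have hcard6 : ∀ x : X, ((hfin x).toFinset).card ≤ C ^ 4 := by
    intro x
    apply card_sep_le hC hr x
    · intro p hp
      rw [Set.Finite.mem_toFinset] at hp
      exact mem_closedBall'.1 hp.2
    · intro p hp q hq hpq
      rw [Set.Finite.mem_toFinset] at hp hq
      exact hssep p hp.1 q hq.1 hpq
  -- key: the good index exists at every x ∈ s
  have hgood : ∀ x ∈ s, ∃ j : ℕ, j ≤ n ∧ ∀ y, ∀ _hy : WellOrderingRel y x, y ∈ s →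
      dist x y ≤ 5 * r → dist x y - (r + (j : ℝ) * (c * r)) - greedyRho s r c n y ∉ Ioo 0 (c * r) := by
    intro x hxs
    by_contra hcon
    push_neg at hcon
    choose Y hY1 hY2 hY3 hY4 using hcon
    have hinj : ∀ j (hj : j ≤ n) k (hk : k ≤ n), Y j hj = Y k hk → j = k := by
      intro j hj k hk heq
      by_contra hne
      have h1 := hY4 j hj
      have h2 := hY4 k hk
      rw [heq] at h1
      set y := Y k hk
      have e1 : 0 < dist x y - (r + (j : ℝ) * (c * r)) - greedyRho s r c n y := h1.1
      have e2 : dist x y - (r + (j : ℝ) * (c * r)) - greedyRho s r c n y < c * r := h1.2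
      have e3 : 0 < dist x y - (r + (k : ℝ) * (c * r)) - greedyRho s r c n y := h2.1
      have e4 : dist x y - (r + (k : ℝ) * (c * r)) - greedyRho s r c n y < c * r := h2.2
      have hjk : 1 ≤ |(j : ℝ) - (k : ℝ)| := by
        rcases Nat.lt_or_ge j k with h | h
        · have hh : (j : ℝ) + 1 ≤ (k : ℝ) := by exact_mod_cast h
          rw [abs_sub_comm, abs_of_nonneg (by linarith)]
          linarith
        · have hlt : k < j := lt_of_le_of_ne h (Ne.symm hne)
          have hh : (k : ℝ) + 1 ≤ (j : ℝ) := by exact_mod_cast hlt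
          rw [abs_of_nonneg (by linarith)]
          linarith
      have hd : |((j : ℝ) - (k : ℝ)) * (c * r)| < c * r := abs_lt.2 ⟨by nlinarith, by nlinarith⟩
      have habs : |(j : ℝ) - (k : ℝ)| * (c * r) < c * r := by
        rwa [abs_mul, abs_of_pos hcr] at hd
      have := mul_le_mul_of_nonneg_right hjk (le_of_lt hcr)
      rw [one_mul] at this
      linarith
    -- build injection from Finset.range (n+1) to neighbors
    set T : Finset X := ((hfin x).toFinset).erase x with hT
    have hTcard : T.card ≤ C ^ 4 := le_trans (Finset.card_erase_le) (hcard6 x)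
    have : (Finset.range (n + 1)).card ≤ T.card := by
      apply Finset.card_le_card_of_injOn (fun j => if hj : j ≤ n then Y j hj else x)
      · intro j hjr
        rw [Finset.coe_range, Set.mem_Iio] at hjr
        have hj : j ≤ n := by omega
        simp only [dif_pos hj]
        rw [hT, Finset.mem_coe, Finset.mem_erase, Set.Finite.mem_toFinset]
        refine ⟨?_, hY2 j hj, ?_⟩
        · intro heq
          have h := hY1 j hj
          rw [heq] at h
          exact (IsWellFounded.wf (r := @WellOrderingRel X)).asymmetric x x h h
        · rw [mem_closedBall, dist_comm]
          calc dist x (Y j hj) ≤ 5 * r := hY3 j hj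
            _ ≤ 6 * r := by linarith
      · intro j hjr k hkr heq
        rw [Finset.coe_range, Set.mem_Iio] at hjr hkr
        have hj : j ≤ n := by omega
        have hk : k ≤ n := by omega
        simp only [dif_pos hj, dif_pos hk] at heq
        exact hinj j hj k hk heq
    rw [Finset.card_range] at this
    omega
  -- properties of ρ on s
  have hρspec : ∀ x ∈ s, (∃ j : ℕ, j ≤ n ∧ greedyRho s r c n x = r + (j : ℝ) * (c * r)) ∧
      ∀ y, WellOrderingRel y x → y ∈ s → dist x y ≤ 5 * r →
        dist x y - greedyRho s r c n x - greedyRho s r c n y ∉ Ioo 0 (c * r) := by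
    intro x hxs
    have h := hgood x hxs
    have heq := greedyRho_eq s r c n x
    rw [dif_pos h] at heq
    obtain ⟨hj, hspec⟩ := h.choose_spec
    constructor
    · exact ⟨h.choose, hj, heq⟩
    · intro y hy hys hdy
      rw [heq]
      exact hspec y hy hys hdy
  have hρrange : ∀ x ∈ s, greedyRho s r c n x ∈ Icc r (2 * r) := by
    intro x hxs
    obtain ⟨⟨j, hj, hjeq⟩, -⟩ := hρspec x hxs
    rw [hjeq]
    constructor
    · nlinarith [Nat.cast_nonneg (α := ℝ) j]
    · have hjn : (j : ℝ) ≤ n := by exact_mod_cast hj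
      have : (j : ℝ) * (c * r) ≤ (n : ℝ) * (c * r) := by nlinarith
      have hnc : (n : ℝ) * c ≤ 1 := by
        rw [hc, mul_one_div, div_le_one (by positivity)]
        linarith
      nlinarith
  -- the pairwise condition holds for all pairs
  have hpair : ∀ x ∈ s, ∀ y ∈ s, dist x y - greedyRho s r c n x - greedyRho s r c n y ∉ Ioo 0 (c * r) := by
    have key : ∀ x ∈ s, ∀ y ∈ s, WellOrderingRel y x →
        dist x y - greedyRho s r c n x - greedyRho s r c n y ∉ Ioo 0 (c * r) := by
      intro x hxs y hys hyx hmem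
      rcases le_or_gt (dist x y) (5 * r) with h5 | h5
      · exact (hρspec x hxs).2 y hyx hys h5 hmem
      · have hx2 := (hρrange x hxs).2
        have hy2 := (hρrange y hys).2
        have : c * r ≤ r := by nlinarith
        have : dist x y - greedyRho s r c n x - greedyRho s r c n y > c * r := by linarith
        exact absurd hmem.2 (by linarith)
    intro x hxs y hys hmem
    rcases trichotomous_of (@WellOrderingRel X) x y with h | h | h
    · have : dist y x - greedyRho s r c n y - greedyRho s r c n x ∈ Ioo 0 (c * r) := by
        rwa [dist_comm, sub_right_comm]
      exact key y hys x hxs h this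
    · subst h
      have h1 := (hρrange x hxs).1
      have : dist x x - greedyRho s r c n x - greedyRho s r c n x < 0 := by
        rw [dist_self]; linarith
      exact absurd hmem.1 (by linarith)
    · exact key x hxs y hys h hmem
  refine ⟨s, greedyRho s r c n, hssep, hρrange, ?_, hpair⟩
  intro z
  obtain ⟨x, hxs, hzx⟩ := hcover z
  exact ⟨x, hxs, mem_ball.2 (lt_of_lt_of_le hzx (hρrange x hxs).1)⟩
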